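/- For a twist T with ‖T‖ < 1 and Λ_T(A) the induced preservation operator on the T-twisted Fock space, Λ_T(A*) = Λ_T(A)*: for all Φ_n, Ψ_n ∈ H^{⊗n}, ⟨Ψ_n, P_{T,n} Λ(A) R_{T,n} Φ_n⟩ = ⟨Λ(A*) R_{T,n} Ψ_n, P_{T,n} Φ_n⟩. -/

import Mathlib

/-- **The adjoint of the preservation operator.**  Model of level `n` of the twisted
Fock space: `E = H^{⊗n}`, `R = R_{T,n}`, `Q = 1 ⊗ P_{T,n−1} ≥ 0`, `P_{T,n} = Q·R`
self-adjoint; `Lam = Λ(A)` and `Lam' = Λ(A*) = Λ(A)*` act on the first tensor factor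
and hence commute with `Q`.  Then `Λ_T(A*) = Λ_T(A)*` with respect to the twisted
inner product: for all `Φₙ, Ψₙ ∈ H^{⊗n}`,
`⟨Ψₙ, P_{T,n} Λ(A) R_{T,n} Φₙ⟩ = ⟨Λ(A*) R_{T,n} Ψₙ, P_{T,n} Φₙ⟩`. -/
theorem preservation_operator_adjoint
    {E : Type*} [NormedAddCommGroup E] [InnerProductSpace ℂ E] [CompleteSpace E]
    (R Q Lam Lam' : E →L[ℂ] E)
    (hQ : Q.IsPositive)
    (hP : IsSelfAdjoint (Q * R))
    (hadj : ContinuousLinearMap.adjoint Lam = Lam')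
    (hcomm : Lam * Q = Q * Lam)
    (hcomm' : Lam' * Q = Q * Lam') :
    ∀ Φn Ψn : E,
      (inner ℂ Ψn ((Q * R) (Lam (R Φn))) : ℂ) =
        (inner ℂ (Lam' (R Ψn)) ((Q * R) Φn) : ℂ) := by
  intro Φn Ψn
  have hQsa : IsSelfAdjoint Q := hQ.isSelfAdjoint
  -- LHS = ⟨(Q*R) Ψn, Lam (R Φn)⟩
  have h1 : (inner ℂ Ψn ((Q * R) (Lam (R Φn))) : ℂ)
      = inner ℂ ((Q * R) Ψn) (Lam (R Φn)) := by
    rw [← ContinuousLinearMap.adjoint_inner_left, hP.adjoint_eq]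
  -- RHS = ⟨R Ψn, Lam (Q (R Φn))⟩ = ⟨R Ψn, Q (Lam (R Φn))⟩ = ⟨Q (R Ψn), Lam (R Φn)⟩
  have h2 : (inner ℂ (Lam' (R Ψn)) ((Q * R) Φn) : ℂ)
      = inner ℂ (R Ψn) (Lam ((Q * R) Φn)) := by
    rw [← hadj, ContinuousLinearMap.adjoint_inner_left]
  have h3 : Lam ((Q * R) Φn) = Q (Lam (R Φn)) := by
    have := congrArg (fun f : E →L[ℂ] E => f (R Φn)) hcomm
    simpa using this
  have h4 : (inner ℂ (R Ψn) (Q (Lam (R Φn))) : ℂ)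
      = inner ℂ (Q (R Ψn)) (Lam (R Φn)) := by
    rw [← ContinuousLinearMap.adjoint_inner_left, hQsa.adjoint_eq]
  have h5 : ((Q * R) Ψn : E) = Q (R Ψn) := rfl
  rw [h1, h2, h3, h4, h5]
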